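/- If a bivariate polynomial p(x,y) of degree at most n = 2k+1 in each variable satisfies ∂_x^{α1} ∂_y^{α2} p(q1, q2) = 0 for all (q1,q2) ∈ {0,1}^2 and (α1,α2) ∈ {0,...,k}^2, then p is identically zero. -/
import Mathlib


open Finset Polynomial

private lemma iteratedDeriv_polyEval (α : ℕ) (p : ℝ[X]) :
    iteratedDeriv α (fun x => p.eval x) = fun x => (Polynomial.derivative^[α] p).eval x := by
  induction α generalizing p with
  | zero => simp
  | succ n ih =>
    rw [iteratedDeriv_succ']
    have hd : (deriv fun x => p.eval x) = fun x => p.derivative.eval x :=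
      funext fun x => Polynomial.deriv p
    rw [hd, ih, ← Function.iterate_succ_apply, Function.iterate_succ_apply']

private lemma hermite_univ_unique (k : ℕ) (p : ℝ[X]) (hdeg : p.natDegree ≤ 2 * k + 1)
    (h0 : ∀ α ≤ k, (Polynomial.derivative^[α] p).eval 0 = 0)
    (h1 : ∀ α ≤ k, (Polynomial.derivative^[α] p).eval 1 = 0) : p = 0 := by
  by_contra hp
  have hfac : ((k.factorial : ℝ)) ≠ 0 := Nat.cast_ne_zero.mpr k.factorial_ne_zero
  have hfacmem : ((k.factorial : ℝ)) ∈ nonZeroDivisors ℝ := mem_nonZeroDivisors_of_ne_zero hfac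
  have hm0 : k < p.rootMultiplicity 0 := by
    rw [Polynomial.lt_rootMultiplicity_iff_isRoot_iterate_derivative_of_mem_nonZeroDivisors hp hfacmem]
    exact fun m hm => h0 m hm
  have hm1 : k < p.rootMultiplicity 1 := by
    rw [Polynomial.lt_rootMultiplicity_iff_isRoot_iterate_derivative_of_mem_nonZeroDivisors hp hfacmem]
    exact fun m hm => h1 m hm
  have hd0 : (X - C (0 : ℝ)) ^ (k + 1) ∣ p :=
    dvd_trans (pow_dvd_pow _ hm0) (p.pow_rootMultiplicity_dvd 0)
  have hd1 : (X - C (1 : ℝ)) ^ (k + 1) ∣ p :=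
    dvd_trans (pow_dvd_pow _ hm1) (p.pow_rootMultiplicity_dvd 1)
  have hcop : IsCoprime ((X - C (0 : ℝ)) ^ (k + 1)) ((X - C (1 : ℝ)) ^ (k + 1)) :=
    (Polynomial.isCoprime_X_sub_C_of_isUnit_sub (by norm_num)).pow
  have hdvd : (X - C (0 : ℝ)) ^ (k + 1) * (X - C (1 : ℝ)) ^ (k + 1) ∣ p := hcop.mul_dvd hd0 hd1
  have hnd : ((X - C (0 : ℝ)) ^ (k + 1) * (X - C (1 : ℝ)) ^ (k + 1)).natDegree = 2 * k + 2 := by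
    rw [Polynomial.natDegree_mul (pow_ne_zero _ (X_sub_C_ne_zero 0))
      (pow_ne_zero _ (X_sub_C_ne_zero 1)), Polynomial.natDegree_pow,
      Polynomial.natDegree_pow, Polynomial.natDegree_X_sub_C,
      Polynomial.natDegree_X_sub_C]
    ring
  have := Polynomial.natDegree_le_of_dvd hdvd hp
  omega

/-- Uniqueness for the bivariate tensor Hermite interpolation problem: if a bivariate
polynomial of degree at most `n = 2k+1` in each variable has all mixed partial derivatives
`∂_x^{α₁}∂_y^{α₂}` with `α₁, α₂ ≤ k` vanishing at the four vertices of the unit square,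
then it vanishes identically. -/
theorem bivariate_hermite_uniqueness (k : ℕ) (c : ℕ → ℕ → ℝ) (f : ℝ → ℝ → ℝ)
    (hf : ∀ x y : ℝ, f x y =
      ∑ i ∈ range (2 * k + 2), ∑ j ∈ range (2 * k + 2), c i j * x ^ i * y ^ j)
    (hdata : ∀ q1 q2 : Fin 2, ∀ α1 ≤ k, ∀ α2 ≤ k,
      iteratedDeriv α1 (fun x => iteratedDeriv α2 (fun y => f x y) (q2 : ℝ)) (q1 : ℝ) = 0) :
    ∀ x y : ℝ, f x y = 0 := by
  classical
  set A : ℕ → ℝ[X] := fun j => ∑ i ∈ range (2 * k + 2), C (c i j) * X ^ i with hA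
  set B : ℝ → ℝ[X] := fun x => ∑ j ∈ range (2 * k + 2), C ((A j).eval x) * X ^ j with hB
  have hfB : ∀ x y : ℝ, f x y = (B x).eval y := by
    intro x y
    rw [hf]
    simp only [hB, hA, Polynomial.eval_finset_sum, Polynomial.eval_mul, Polynomial.eval_C,
      Polynomial.eval_pow, Polynomial.eval_X]
    rw [Finset.sum_comm]
    refine Finset.sum_congr rfl fun j _ => ?_
    rw [Finset.sum_mul]
  -- the y-iterated derivative of f x · at q equals a polynomial in x
  have key : ∀ (α2 : ℕ) (q : ℝ) (x : ℝ),
      iteratedDeriv α2 (fun y => f x y) q =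
        (∑ j ∈ range (2 * k + 2),
          C ((Polynomial.derivative^[α2] (X ^ j : ℝ[X])).eval q) * A j).eval x := by
    intro α2 q x
    have : (fun y => f x y) = fun y => (B x).eval y := funext fun y => hfB x y
    rw [this, iteratedDeriv_polyEval]
    simp only [hB, Polynomial.iterate_derivative_sum, Polynomial.iterate_derivative_C_mul,
      Polynomial.eval_finset_sum, Polynomial.eval_mul, Polynomial.eval_C]
    exact Finset.sum_congr rfl fun j _ => by ring
  have hAdeg : ∀ j, (A j).natDegree ≤ 2 * k + 1 := by
    intro j
    apply Polynomial.natDegree_sum_le_of_forall_le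
    intro i hi
    refine (Polynomial.natDegree_C_mul_le _ _).trans ?_
    rw [Polynomial.natDegree_X_pow]
    have := Finset.mem_range.mp hi
    omega
  -- Step 1: for each α2 ≤ k, q2 ∈ {0,1}, the polynomial above is identically zero
  have step1 : ∀ α2 ≤ k, ∀ q2 : Fin 2, ∀ x : ℝ,
      iteratedDeriv α2 (fun y => f x y) (q2 : ℝ) = 0 := by
    intro α2 hα2 q2 x
    set H : ℝ[X] := ∑ j ∈ range (2 * k + 2),
      C ((Polynomial.derivative^[α2] (X ^ j : ℝ[X])).eval (q2 : ℝ)) * A j with hH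
    have hHdeg : H.natDegree ≤ 2 * k + 1 := by
      apply Polynomial.natDegree_sum_le_of_forall_le
      intro j _
      exact (Polynomial.natDegree_C_mul_le _ _).trans (hAdeg j)
    have hHder : ∀ α1 ≤ k, ∀ q1 : Fin 2,
        (Polynomial.derivative^[α1] H).eval (q1 : ℝ) = 0 := by
      intro α1 hα1 q1
      have := hdata q1 q2 α1 hα1 α2 hα2
      have heq : (fun x => iteratedDeriv α2 (fun y => f x y) (q2 : ℝ)) =
          fun x => H.eval x := funext fun x => key α2 (q2 : ℝ) x
      rw [heq, iteratedDeriv_polyEval] at this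
      exact this
    have hH0 : H = 0 := by
      apply hermite_univ_unique k H hHdeg
      · intro α hα
        simpa using hHder α hα 0
      · intro α hα
        simpa using hHder α hα 1
    rw [key α2 (q2 : ℝ) x, ← hH, hH0, Polynomial.eval_zero]
  -- Step 2: for each x, the polynomial B x is zero
  intro x y
  have hBdeg : (B x).natDegree ≤ 2 * k + 1 := by
    apply Polynomial.natDegree_sum_le_of_forall_le
    intro j hj
    refine (Polynomial.natDegree_C_mul_le _ _).trans ?_
    rw [Polynomial.natDegree_X_pow]
    have := Finset.mem_range.mp hj
    omega
  have hBder : ∀ α2 ≤ k, ∀ q2 : Fin 2,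
      (Polynomial.derivative^[α2] (B x)).eval (q2 : ℝ) = 0 := by
    intro α2 hα2 q2
    have := step1 α2 hα2 q2 x
    have heq : (fun y => f x y) = fun y => (B x).eval y := funext fun y => hfB x y
    rw [heq, iteratedDeriv_polyEval] at this
    exact this
  have hB0 : B x = 0 := by
    apply hermite_univ_unique k (B x) hBdeg
    · intro α hα
      simpa using hBder α hα 0
    · intro α hα
      simpa using hBder α hα 1
  rw [hfB x y, hB0, Polynomial.eval_zero]
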